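/- Let μ be a σ-finite Borel measure on ℝ^n and let p and q be Borel probability measures absolutely continuous with respect to μ with density representatives ρ_p and ρ_q that are μ-almost everywhere strictly positive. Define g*(x) = log ρ_p(x) − log ρ_q(x). Then g* minimizes the logistic discriminator loss: for every measurable g: ℝ^n → ℝ, ∫ log(1 + e^{−g*(x)}) dp(x) + ∫ log(1 + e^{g*(x)}) dq(x) ≤ ∫ log(1 + e^{−g(x)}) dp(x) + ∫ log(1 + e^{g(x)}) dq(x). -/

import Mathlib

open MeasureTheory Metric Set
open scoped ENNReal

noncomputable section

/-- The topological support of a Borel measure: the smallest closed set of full measure,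
realized as the intersection of all closed sets whose complement is null. -/
def msupport {X : Type*} [TopologicalSpace X] [MeasurableSpace X] (μ : Measure X) : Set X :=
  ⋂₀ {S : Set X | IsClosed S ∧ μ Sᶜ = 0}

/-- The symmetric support difference (SSD) divergence
`D_△(p, q) = ∫ d(x, supp q) dp + ∫ d(x, supp p) dq` (valued in `ℝ≥0∞`). -/
def Dtri {X : Type*} [MeasurableSpace X] [PseudoMetricSpace X] (p q : Measure X) : ℝ≥0∞ :=
  (∫⁻ x, ENNReal.ofReal (infDist x (msupport q)) ∂p) +
  (∫⁻ x, ENNReal.ofReal (infDist x (msupport p)) ∂q)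

/-- The Wasserstein-1 distance: infimum of `∫ d(x, y) dγ` over couplings of `p` and `q`. -/
def DW {X : Type*} [MeasurableSpace X] [PseudoMetricSpace X] (p q : Measure X) : ℝ≥0∞ :=
  ⨅ γ ∈ {γ : Measure (X × X) | γ.map Prod.fst = p ∧ γ.map Prod.snd = q},
    ∫⁻ z, ENNReal.ofReal (dist z.1 z.2) ∂γ

/-- The β-admissible Wasserstein distance: infimum of `∫ d(x, y) dγ` over measures `γ`
whose first marginal is `p` and whose second marginal is `≤ (1 + β) • q`. -/
def DWbeta {X : Type*} [MeasurableSpace X] [PseudoMetricSpace X]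
    (β : ℝ) (p q : Measure X) : ℝ≥0∞ :=
  ⨅ γ ∈ {γ : Measure (X × X) |
      γ.map Prod.fst = p ∧ γ.map Prod.snd ≤ (ENNReal.ofReal (1 + β)) • q},
    ∫⁻ z, ENNReal.ofReal (dist z.1 z.2) ∂γ

/-- The symmetrized (β₁, β₂)-admissible Wasserstein distance. -/
def DWsym {X : Type*} [MeasurableSpace X] [PseudoMetricSpace X]
    (β₁ β₂ : ℝ) (p q : Measure X) : ℝ≥0∞ :=
  DWbeta β₁ p q + DWbeta β₂ q p

lemma logistic_key (a b t : ℝ) (ha : 0 < a) (hb : 0 < b) :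
    a * Real.log (1 + Real.exp (-(Real.log a - Real.log b))) +
      b * Real.log (1 + Real.exp (Real.log a - Real.log b)) ≤
    a * Real.log (1 + Real.exp (-t)) + b * Real.log (1 + Real.exp t) := by
  have hab : 0 < a + b := by linarith
  have he : Real.exp (Real.log a - Real.log b) = a / b := by
    rw [Real.exp_sub, Real.exp_log ha, Real.exp_log hb]
  have he' : Real.exp (-(Real.log a - Real.log b)) = b / a := by
    rw [neg_sub, Real.exp_sub, Real.exp_log hb, Real.exp_log ha]
  rw [he, he']
  have h1 : 1 + b / a = (a + b) / a := by field_simp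
  have h2 : 1 + a / b = (a + b) / b := by field_simp; ring
  rw [h1, h2, Real.log_div hab.ne' ha.ne', Real.log_div hab.ne' hb.ne']
  set s := Real.exp t / (1 + Real.exp t) with hs
  have hexp := Real.exp_pos t
  have h1e : 0 < 1 + Real.exp t := by linarith
  have hs0 : 0 < s := div_pos hexp h1e
  have hs1 : s < 1 := (div_lt_one h1e).2 (by linarith)
  have hs1' : 0 < 1 - s := by linarith
  have hA : Real.log (1 + Real.exp (-t)) = - Real.log s := by
    have h : 1 + Real.exp (-t) = 1 / s := by
      rw [Real.exp_neg, hs]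
      field_simp
      ring
    rw [h, one_div, Real.log_inv]
  have hB : Real.log (1 + Real.exp t) = - Real.log (1 - s) := by
    have h : 1 - s = 1 / (1 + Real.exp t) := by
      rw [hs]; field_simp; ring
    rw [h, one_div, Real.log_inv, neg_neg]
  rw [hA, hB]
  set u := s * (a + b) / a with hu
  set v := (1 - s) * (a + b) / b with hv
  have hu0 : 0 < u := by positivity
  have hv0 : 0 < v := by positivity
  have hlu : Real.log u = Real.log s + Real.log (a + b) - Real.log a := by
    rw [hu, Real.log_div (by positivity) ha.ne', Real.log_mul hs0.ne' hab.ne']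
  have hlv : Real.log v = Real.log (1 - s) + Real.log (a + b) - Real.log b := by
    rw [hv, Real.log_div (by positivity) hb.ne', Real.log_mul hs1'.ne' hab.ne']
  have h3 : a * Real.log u + b * Real.log v ≤ a * (u - 1) + b * (v - 1) :=
    add_le_add (mul_le_mul_of_nonneg_left (Real.log_le_sub_one_of_pos hu0) ha.le)
      (mul_le_mul_of_nonneg_left (Real.log_le_sub_one_of_pos hv0) hb.le)
  have h4 : a * (u - 1) + b * (v - 1) = 0 := by
    rw [hu, hv]; field_simp; ring
  have h5 : a * Real.log u = a * Real.log s + a * Real.log (a + b) - a * Real.log a := by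
    rw [hlu]; ring
  have h6 : b * Real.log v = b * Real.log (1 - s) + b * Real.log (a + b) - b * Real.log b := by
    rw [hlv]; ring
  nlinarith [h3, h4, h5, h6]

private lemma logistic_meas {α : Type*} [MeasurableSpace α] {f : α → ℝ} (hf : Measurable f) :
    Measurable (fun x => ENNReal.ofReal (Real.log (1 + Real.exp (f x)))) :=
  ENNReal.measurable_ofReal.comp ((Real.measurable_log.comp
    (measurable_const.add (Real.measurable_exp.comp hf))))

private lemma log_one_add_exp_nonneg (t : ℝ) : 0 ≤ Real.log (1 + Real.exp t) :=
  Real.log_nonneg (by linarith [Real.exp_pos t])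

/-- The log-density-ratio `g*(x) = log ρ_p(x) − log ρ_q(x)` minimizes the
logistic discriminator loss among all measurable discriminators. -/
theorem log_density_ratio_minimizes_logistic_loss (n : ℕ)
    (μ : Measure (EuclideanSpace ℝ (Fin n))) [SigmaFinite μ]
    (p q : Measure (EuclideanSpace ℝ (Fin n)))
    [IsProbabilityMeasure p] [IsProbabilityMeasure q]
    (ρp ρq : EuclideanSpace ℝ (Fin n) → ℝ)
    (hρp_meas : Measurable ρp) (hρq_meas : Measurable ρq)
    (hp : p = μ.withDensity (fun x => ENNReal.ofReal (ρp x)))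
    (hq : q = μ.withDensity (fun x => ENNReal.ofReal (ρq x)))
    (hρp_pos : ∀ᵐ x ∂μ, 0 < ρp x) (hρq_pos : ∀ᵐ x ∂μ, 0 < ρq x)
    (gstar : EuclideanSpace ℝ (Fin n) → ℝ)
    (hgstar : ∀ x, gstar x = Real.log (ρp x) - Real.log (ρq x)) :
    ∀ g : EuclideanSpace ℝ (Fin n) → ℝ, Measurable g →
      (∫⁻ x, ENNReal.ofReal (Real.log (1 + Real.exp (-(gstar x)))) ∂p) +
        (∫⁻ x, ENNReal.ofReal (Real.log (1 + Real.exp (gstar x))) ∂q) ≤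
      (∫⁻ x, ENNReal.ofReal (Real.log (1 + Real.exp (-(g x)))) ∂p) +
        (∫⁻ x, ENNReal.ofReal (Real.log (1 + Real.exp (g x))) ∂q) := by
  intro g hg
  have hgsm : Measurable gstar := by
    rw [show gstar = fun x => Real.log (ρp x) - Real.log (ρq x) from funext hgstar]
    exact (Real.measurable_log.comp hρp_meas).sub (Real.measurable_log.comp hρq_meas)
  have hdp : Measurable (fun x => ENNReal.ofReal (ρp x)) :=
    ENNReal.measurable_ofReal.comp hρp_meas
  have hdq : Measurable (fun x => ENNReal.ofReal (ρq x)) :=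
    ENNReal.measurable_ofReal.comp hρq_meas
  have hm1 : Measurable (fun x => ENNReal.ofReal (Real.log (1 + Real.exp (-gstar x)))) :=
    logistic_meas hgsm.neg
  have hm2 := logistic_meas hgsm
  have hm3 : Measurable (fun x => ENNReal.ofReal (Real.log (1 + Real.exp (-g x)))) :=
    logistic_meas hg.neg
  have hm4 := logistic_meas hg
  rw [hp, hq,
    lintegral_withDensity_eq_lintegral_mul _ hdp hm1,
    lintegral_withDensity_eq_lintegral_mul _ hdq hm2,
    lintegral_withDensity_eq_lintegral_mul _ hdp hm3,
    lintegral_withDensity_eq_lintegral_mul _ hdq hm4]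
  simp only [Pi.mul_apply]
  have e1 : ∫⁻ x, ENNReal.ofReal (ρp x) * ENNReal.ofReal (Real.log (1 + Real.exp (-gstar x))) ∂μ +
      ∫⁻ x, ENNReal.ofReal (ρq x) * ENNReal.ofReal (Real.log (1 + Real.exp (gstar x))) ∂μ =
      ∫⁻ x, (ENNReal.ofReal (ρp x) * ENNReal.ofReal (Real.log (1 + Real.exp (-gstar x))) +
        ENNReal.ofReal (ρq x) * ENNReal.ofReal (Real.log (1 + Real.exp (gstar x)))) ∂μ :=
    (lintegral_add_left (hdp.mul hm1) _).symm
  have e2 : ∫⁻ x, ENNReal.ofReal (ρp x) * ENNReal.ofReal (Real.log (1 + Real.exp (-g x))) ∂μ +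
      ∫⁻ x, ENNReal.ofReal (ρq x) * ENNReal.ofReal (Real.log (1 + Real.exp (g x))) ∂μ =
      ∫⁻ x, (ENNReal.ofReal (ρp x) * ENNReal.ofReal (Real.log (1 + Real.exp (-g x))) +
        ENNReal.ofReal (ρq x) * ENNReal.ofReal (Real.log (1 + Real.exp (g x)))) ∂μ :=
    (lintegral_add_left (hdp.mul hm3) _).symm
  rw [e1, e2]
  refine lintegral_mono_ae ?_
  filter_upwards [hρp_pos, hρq_pos] with x hpx hqx
  have hA1 := log_one_add_exp_nonneg (-(gstar x))
  have hA2 := log_one_add_exp_nonneg (gstar x)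
  have hA3 := log_one_add_exp_nonneg (-(g x))
  have hA4 := log_one_add_exp_nonneg (g x)
  rw [← ENNReal.ofReal_mul hpx.le, ← ENNReal.ofReal_mul hqx.le,
    ← ENNReal.ofReal_mul hpx.le, ← ENNReal.ofReal_mul hqx.le,
    ← ENNReal.ofReal_add (by positivity) (by positivity),
    ← ENNReal.ofReal_add (by positivity) (by positivity)]
  refine ENNReal.ofReal_le_ofReal ?_
  rw [hgstar x]
  exact logistic_key (ρp x) (ρq x) (g x) hpx hqx
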